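/- arXiv:2001.07999 — 2 statements merged into one kernel-verified Lean document; each statement's English description precedes it below -/
import Mathlib

section
/- Let f : ℝ^p → ℝ be a convex function. Then for every x ∈ ℝ^p, the function F_x : λ ↦ sup{⟨z, x⟩ : f(z) ≤ λ} (with values in ℝ ∪ {±∞}) is concave on the set of λ where the sublevel set {z : f(z) ≤ λ} is nonempty. -/
lemma aux_lt_mul_iSup {E : Type*} {t : ℝ} (ht : 0 < t) {c : EReal} {S : Set E}
    {g : E → EReal} (h : c < (t : EReal) * ⨆ z ∈ S, g z) :
    ∃ z ∈ S, c ≤ (t : EReal) * g z := by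
  have ht' : (0 : EReal) < (t : EReal) := by exact_mod_cast ht
  have htop : (t : EReal) ≠ ⊤ := EReal.coe_ne_top t
  have hdiv : c / (t : EReal) < ⨆ z ∈ S, g z := by
    by_contra hle
    push_neg at hle
    rw [EReal.le_div_iff_mul_le ht' htop, mul_comm] at hle
    exact absurd hle (not_le.mpr h)
  obtain ⟨z, hz⟩ := lt_iSup_iff.mp hdiv
  obtain ⟨hzS, hz'⟩ := lt_iSup_iff.mp hz
  exact ⟨z, hzS, (EReal.div_le_iff_le_mul ht' htop).mp hz'.le⟩

theorem stmt4 (p : ℕ) (f : EuclideanSpace ℝ (Fin p) → ℝ)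
    (hf : ConvexOn ℝ Set.univ f) (x : EuclideanSpace ℝ (Fin p)) :
    ∀ l₁ l₂ : ℝ, {z | f z ≤ l₁}.Nonempty → {z | f z ≤ l₂}.Nonempty →
      ∀ t ∈ Set.Icc (0 : ℝ) 1,
        ((t : ℝ) : EReal) * (⨆ z ∈ {z | f z ≤ l₁}, ((inner ℝ z x : ℝ) : EReal)) +
          (((1 - t : ℝ)) : EReal) * (⨆ z ∈ {z | f z ≤ l₂}, ((inner ℝ z x : ℝ) : EReal)) ≤
        ⨆ z ∈ {z | f z ≤ t * l₁ + (1 - t) * l₂}, ((inner ℝ z x : ℝ) : EReal) := by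
  intro l₁ l₂ h₁ h₂ t ht
  rcases eq_or_lt_of_le ht.1 with h0 | h0
  · -- t = 0
    subst h0
    simp only [EReal.coe_zero, zero_mul, sub_zero, EReal.coe_one, one_mul, zero_add,
      zero_mul, one_mul]
    norm_num
  rcases eq_or_lt_of_le ht.2 with h1 | h1
  · -- t = 1
    subst h1
    simp only [sub_self, EReal.coe_zero, zero_mul, EReal.coe_one, one_mul, add_zero]
    norm_num
  have h1' : 0 < 1 - t := by linarith
  apply EReal.add_le_of_forall_lt
  intro a' ha' b' hb'
  obtain ⟨z₁, hz₁, ha⟩ := aux_lt_mul_iSup h0 ha'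
  obtain ⟨z₂, hz₂, hb⟩ := aux_lt_mul_iSup h1' hb'
  have hmem : f (t • z₁ + (1 - t) • z₂) ≤ t * l₁ + (1 - t) * l₂ := by
    have := hf.2 (Set.mem_univ z₁) (Set.mem_univ z₂) h0.le h1'.le (by ring)
    simp only [smul_eq_mul] at this
    refine this.trans ?_
    have := mul_le_mul_of_nonneg_left hz₁ h0.le
    have := mul_le_mul_of_nonneg_left hz₂ h1'.le
    linarith
  have hinner : (inner ℝ (t • z₁ + (1 - t) • z₂) x : ℝ)
      = t * (inner ℝ z₁ x : ℝ) + (1 - t) * (inner ℝ z₂ x : ℝ) := by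
    rw [inner_add_left, real_inner_smul_left, real_inner_smul_left]
  calc a' + b' ≤ (t : EReal) * ((inner ℝ z₁ x : ℝ) : EReal)
        + ((1 - t : ℝ) : EReal) * ((inner ℝ z₂ x : ℝ) : EReal) := add_le_add ha hb
    _ = ((inner ℝ (t • z₁ + (1 - t) • z₂) x : ℝ) : EReal) := by
        rw [hinner]
        push_cast
        ring
    _ ≤ ⨆ z ∈ {z | f z ≤ t * l₁ + (1 - t) * l₂}, ((inner ℝ z x : ℝ) : EReal) := by
        apply le_iSup₂_of_le (t • z₁ + (1 - t) • z₂) hmem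
        exact le_rfl
end

section
/- Let g, f with g : ℝ → ℝ and f : ℝ^p → ℝ be C^k functions, m ≤ k, and i₁,…,i_m ∈ {1,…,p}. Then ∂^m (g∘f)/∂x_{i₁}⋯∂x_{i_m} (x) = Σ_{π ∈ P} g^{(|π|)}(f(x)) · Π_{B ∈ π} ∂^{|B|} f / Π_{l ∈ B} ∂x_{i_l} (x), where P is the set of partitions of {1,…,m}. -/
open scoped Classical in
/-- The set of partitions of `{0, …, m-1}` encoded as finsets of nonempty disjoint blocks
covering `Finset.univ : Finset (Fin m)`. -/
noncomputable def partitionsOf (m : ℕ) : Finset (Finset (Finset (Fin m))) :=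
  (Finset.univ : Finset (Fin m)).powerset.powerset.filter
    (fun π => (∅ ∉ π) ∧ ∀ i : Fin m, ∃! B, B ∈ π ∧ i ∈ B)

open Finset

namespace FaaAux


variable {m : ℕ}

/-- The `j`-th block of an ordered finpartition, as a finset. -/
def part (c : OrderedFinpartition m) (j : Fin c.length) : Finset (Fin m) :=
  Finset.image (c.emb j) Finset.univ

lemma mem_part_iff {c : OrderedFinpartition m} {j : Fin c.length} {x : Fin m} :
    x ∈ part c j ↔ x ∈ Set.range (c.emb j) := by
  simp [part, Set.mem_range]

lemma card_part (c : OrderedFinpartition m) (j : Fin c.length) :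
    (part c j).card = c.partSize j := by
  rw [part, Finset.card_image_of_injective _ (c.emb_strictMono j).injective, card_univ,
    Fintype.card_fin]

lemma part_nonempty (c : OrderedFinpartition m) (j : Fin c.length) : (part c j).Nonempty :=
  ⟨c.emb j ⟨0, c.partSize_pos j⟩, Finset.mem_image_of_mem _ (mem_univ _)⟩

lemma emb_eq_orderEmbOfFin (c : OrderedFinpartition m) (j : Fin c.length) :
    c.emb j = ⇑((part c j).orderEmbOfFin (card_part c j)) :=
  Finset.orderEmbOfFin_unique _ (fun x => Finset.mem_image_of_mem _ (mem_univ x))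
    (c.emb_strictMono j)

lemma max'_part (c : OrderedFinpartition m) (j : Fin c.length) :
    (part c j).max' (part_nonempty c j) =
      c.emb j ⟨c.partSize j - 1, Nat.sub_one_lt_of_lt (c.partSize_pos j)⟩ := by
  rw [emb_eq_orderEmbOfFin]
  exact (Finset.orderEmbOfFin_last (card_part c j) (c.partSize_pos j)).symm

lemma part_disjoint (c : OrderedFinpartition m) {j j' : Fin c.length} (h : j ≠ j') :
    Disjoint (part c j) (part c j') := by
  rw [Finset.disjoint_left]
  intro a ha ha'
  rw [mem_part_iff] at ha ha'
  exact Set.disjoint_left.1 (c.disjoint (Set.mem_univ j) (Set.mem_univ j') h) ha ha'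

lemma part_injective (c : OrderedFinpartition m) : Function.Injective (part c) := by
  intro j j' h
  by_contra hne
  have := part_disjoint c hne
  rw [h, disjoint_self] at this
  exact (part_nonempty c j').ne_empty (h ▸ this)

/-- The underlying unordered partition of an ordered finpartition. -/
def toPart (c : OrderedFinpartition m) : Finset (Finset (Fin m)) :=
  Finset.image (part c) Finset.univ

lemma card_toPart (c : OrderedFinpartition m) : (toPart c).card = c.length := by
  rw [toPart, Finset.card_image_of_injective _ (part_injective c), card_univ, Fintype.card_fin]

lemma mem_partitionsOf_iff {π : Finset (Finset (Fin m))} :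
    π ∈ partitionsOf m ↔ (∅ ∉ π ∧ ∀ i : Fin m, ∃! B, B ∈ π ∧ i ∈ B) := by
  classical
  rw [partitionsOf, Finset.mem_filter, and_iff_right_iff_imp]
  intro _
  rw [Finset.mem_powerset]
  intro B _
  exact Finset.mem_powerset.2 (Finset.subset_univ B)

lemma toPart_mem (c : OrderedFinpartition m) : toPart c ∈ partitionsOf m := by
  rw [mem_partitionsOf_iff]
  constructor
  · intro h
    rw [toPart, Finset.mem_image] at h
    obtain ⟨j, -, hj⟩ := h
    exact (part_nonempty c j).ne_empty hj
  · intro i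
    refine ⟨part c (c.index i), ⟨Finset.mem_image_of_mem _ (mem_univ _), ?_⟩, ?_⟩
    · rw [mem_part_iff]
      exact ⟨c.invEmbedding i, c.emb_invEmbedding i⟩
    · rintro B ⟨hB, hiB⟩
      rw [toPart, Finset.mem_image] at hB
      obtain ⟨j, -, rfl⟩ := hB
      congr 1
      by_contra hne
      exact Finset.disjoint_left.1 (part_disjoint c hne) hiB
        (by rw [mem_part_iff]; exact ⟨c.invEmbedding i, c.emb_invEmbedding i⟩)


variable {m : ℕ}

/-- Build an `OrderedFinpartition` from a family of blocks ordered by max. -/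
noncomputable def build (L : ℕ) (P : Fin L → Finset (Fin m))
    (hne : ∀ j, (P j).Nonempty)
    (hdis : ∀ j j', j ≠ j' → Disjoint (P j) (P j'))
    (hcov : ∀ x : Fin m, ∃ j, x ∈ P j)
    (hmono : StrictMono fun j => (P j).max' (hne j)) : OrderedFinpartition m where
  length := L
  partSize j := (P j).card
  partSize_pos j := Finset.card_pos.2 (hne j)
  emb j := (P j).orderEmbOfFin rfl
  emb_strictMono j := ((P j).orderEmbOfFin rfl).strictMono
  parts_strictMono := by
    have : (fun j => (P j).orderEmbOfFin rfl
        ⟨(P j).card - 1, Nat.sub_one_lt_of_lt (Finset.card_pos.2 (hne j))⟩) =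
        fun j => (P j).max' (hne j) := by
      funext j
      exact Finset.orderEmbOfFin_last rfl (Finset.card_pos.2 (hne j))
    exact this ▸ hmono
  disjoint := by
    intro j _ j' _ h
    have := hdis j j' h
    rw [Finset.disjoint_coe.symm] at this
    simpa [Finset.range_orderEmbOfFin] using this
  cover := by
    intro x
    obtain ⟨j, hj⟩ := hcov x
    exact ⟨j, by rw [Finset.range_orderEmbOfFin]; exact hj⟩

lemma part_build (L : ℕ) (P : Fin L → Finset (Fin m)) (hne hdis hcov hmono) (j : Fin L) :
    Finset.image ((build L P hne hdis hcov hmono).emb j) Finset.univ = P j := by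
  have : ((Finset.image ((build L P hne hdis hcov hmono).emb j) Finset.univ : Finset (Fin m)) :
      Set (Fin m)) = (P j : Set (Fin m)) := by
    rw [Finset.coe_image, Finset.coe_univ, Set.image_univ]
    exact Finset.range_orderEmbOfFin _ _
  exact_mod_cast Finset.coe_injective this


variable {m : ℕ} {π : Finset (Finset (Fin m))}
  (hun : ∀ i : Fin m, ∃! B, B ∈ π ∧ i ∈ B)

/-- The block of the partition containing `j`. -/
noncomputable def blk (j : Fin m) : Finset (Fin m) := (hun j).exists.choose

lemma blk_mem (j : Fin m) : blk hun j ∈ π := (hun j).exists.choose_spec.1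

lemma mem_blk (j : Fin m) : j ∈ blk hun j := (hun j).exists.choose_spec.2

lemma blk_eq {B : Finset (Fin m)} {j : Fin m} (hB : B ∈ π) (hj : j ∈ B) : B = blk hun j :=
  (hun j).unique ⟨hB, hj⟩ (hun j).exists.choose_spec

lemma blk_nonempty (j : Fin m) : (blk hun j).Nonempty := ⟨j, mem_blk hun j⟩

lemma mem_nonempty {B : Finset (Fin m)} (hB : B ∈ π) (h0 : ∅ ∉ π) : B.Nonempty := by
  rcases B.eq_empty_or_nonempty with h | h
  · exact absurd (h ▸ hB) h0
  · exact h

/-- The set of maximal elements of blocks. -/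
noncomputable def maxes : Finset (Fin m) :=
  Finset.univ.filter (fun j => (blk hun j).max' (blk_nonempty hun j) = j)

lemma mem_maxes {j : Fin m} : j ∈ maxes hun ↔ (blk hun j).max' (blk_nonempty hun j) = j := by
  simp [maxes]

lemma max'_eq_max' {A C : Finset (Fin m)} (h : A = C) (hA : A.Nonempty) (hC : C.Nonempty) :
    A.max' hA = C.max' hC := by subst h; rfl

lemma max'_mem_maxes {B : Finset (Fin m)} (hB : B ∈ π) (hBne : B.Nonempty) :
    B.max' hBne ∈ maxes hun := by
  rw [mem_maxes]
  exact (max'_eq_max' (blk_eq hun hB (B.max'_mem hBne)).symm _ _).trans rfl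

lemma card_maxes (h0 : ∅ ∉ π) : (maxes hun).card = π.card := by
  apply Finset.card_bij (fun j _ => blk hun j)
  · intro a _; exact blk_mem hun a
  · intro a ha b hb h
    rw [mem_maxes] at ha hb
    rw [← ha, ← hb]
    exact max'_eq_max' h _ _
  · intro B hB
    have hBne : B.Nonempty := mem_nonempty hB h0
    exact ⟨B.max' hBne, max'_mem_maxes hun hB hBne, (blk_eq hun hB (B.max'_mem hBne)).symm⟩


variable (h0 : ∅ ∉ π)

/-- enumeration of the maxes -/
noncomputable def embMax (j : Fin π.card) : Fin m :=
  (maxes hun).orderEmbOfFin (card_maxes hun h0) j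

lemma embMax_mem_maxes (j : Fin π.card) : embMax hun h0 j ∈ maxes hun :=
  Finset.orderEmbOfFin_mem _ _ _

lemma blk_max'_eq {s : Fin m} (hs : s ∈ maxes hun) :
    (blk hun s).max' (blk_nonempty hun s) = s := (mem_maxes hun).1 hs

/-- Construction of an ordered finpartition from an unordered partition. -/
noncomputable def ofPart : OrderedFinpartition m := by
  refine build π.card (fun j => blk hun (embMax hun h0 j)) (fun j => blk_nonempty hun _)
    ?_ ?_ ?_
  · intro j j' hjj'
    rw [Finset.disjoint_left]
    intro a ha ha'
    apply hjj'
    replace ha : a ∈ blk hun (embMax hun h0 j) := ha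
    replace ha' : a ∈ blk hun (embMax hun h0 j') := ha'
    have hbb : blk hun (embMax hun h0 j) = blk hun (embMax hun h0 j') :=
      (blk_eq hun (blk_mem hun _) ha).trans (blk_eq hun (blk_mem hun _) ha').symm
    have h1 := blk_max'_eq hun (embMax_mem_maxes hun h0 j)
    have h2 := blk_max'_eq hun (embMax_mem_maxes hun h0 j')
    have : embMax hun h0 j = embMax hun h0 j' := by
      rw [← h1, ← h2]; exact max'_eq_max' hbb _ _
    exact ((maxes hun).orderEmbOfFin (card_maxes hun h0)).injective this
  · intro x
    have hmem : (blk hun x).max' (blk_nonempty hun x) ∈ maxes hun :=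
      max'_mem_maxes hun (blk_mem hun x) (blk_nonempty hun x)
    have : (blk hun x).max' (blk_nonempty hun x) ∈
        Set.range ((maxes hun).orderEmbOfFin (card_maxes hun h0)) := by
      rw [Finset.range_orderEmbOfFin]; exact_mod_cast hmem
    obtain ⟨j, hj⟩ := this
    refine ⟨j, ?_⟩
    show x ∈ blk hun (embMax hun h0 j)
    have : blk hun (embMax hun h0 j) = blk hun x := by
      rw [embMax, hj]
      exact (blk_eq hun (blk_mem hun x) ((blk hun x).max'_mem _)).symm
    rw [this]
    exact mem_blk hun x
  · have heq : (fun j => (blk hun (embMax hun h0 j)).max' (blk_nonempty hun _)) =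
        fun j => embMax hun h0 j := by
      funext j
      exact blk_max'_eq hun (embMax_mem_maxes hun h0 j)
    rw [heq]
    exact ((maxes hun).orderEmbOfFin (card_maxes hun h0)).strictMono

lemma length_ofPart : (ofPart hun h0).length = π.card := rfl

lemma part_ofPart (j : Fin π.card) : part (ofPart hun h0) j = blk hun (embMax hun h0 j) :=
  part_build _ _ _ _ _ _ j

lemma toPart_ofPart : toPart (ofPart hun h0) = π := by
  apply Finset.Subset.antisymm
  · intro B hB
    rw [toPart, Finset.mem_image] at hB
    obtain ⟨j, -, rfl⟩ := hB
    rw [part_ofPart hun h0 j]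
    exact blk_mem hun _
  · intro B hB
    have hBne := mem_nonempty hB h0
    have hmem : B.max' hBne ∈ maxes hun := max'_mem_maxes hun hB hBne
    have : B.max' hBne ∈ Set.range ((maxes hun).orderEmbOfFin (card_maxes hun h0)) := by
      rw [Finset.range_orderEmbOfFin]; exact_mod_cast hmem
    obtain ⟨j, hj⟩ := this
    rw [toPart, Finset.mem_image]
    refine ⟨j, mem_univ _, ?_⟩
    rw [part_ofPart, embMax, hj]
    exact (blk_eq hun hB (B.max'_mem hBne)).symm

/-- Extensionality for ordered finpartitions via their blocks. -/
lemma ext' {c c' : OrderedFinpartition m} (h : c.length = c'.length)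
    (hp : ∀ j : Fin c.length, part c j = part c' (Fin.cast h j)) : c = c' := by
  obtain ⟨L, ps, pos, emb, hsm, hparts, hdisj, hcov⟩ := c
  obtain ⟨L', ps', pos', emb', hsm', hparts', hdisj', hcov'⟩ := c'
  dsimp at h
  subst h
  have hps : ps = ps' := by
    funext j
    have h2 := congrArg Finset.card (hp j)
    simp only [part, Finset.card_image_of_injective _ (hsm j).injective,
      Finset.card_image_of_injective _ (hsm' (Fin.cast rfl j)).injective, card_univ,
      Fintype.card_fin] at h2
    exact h2
  subst hps
  have he : emb = emb' := by
    funext j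
    have h2 := hp j
    have : (Fin.cast rfl j : Fin L) = j := rfl
    rw [this] at h2
    have h3 := congrArg (fun (s : Finset (Fin m)) => (s : Set (Fin m))) h2
    simp only [part, Finset.coe_image, Finset.coe_univ, Set.image_univ] at h3
    haveI : WellFoundedLT (Fin (ps j)) := inferInstance
    exact (StrictMono.range_inj (β := Fin (ps j)) (γ := Fin m) (hsm j) (hsm' j)).1 h3
  subst he
  rfl

lemma max'_part_strictMono (c : OrderedFinpartition m) :
    StrictMono fun j => (part c j).max' (part_nonempty c j) := by
  have e : (fun j => (part c j).max' (part_nonempty c j)) =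
      fun j => c.emb j ⟨c.partSize j - 1, Nat.sub_one_lt_of_lt (c.partSize_pos j)⟩ :=
    funext (max'_part c)
  rw [e]
  exact c.parts_strictMono

lemma cast_strictMono {a b : ℕ} (h : a = b) : StrictMono (Fin.cast h) := by
  intro x y hxy
  exact hxy

lemma toPart_injective {c c' : OrderedFinpartition m} (h : toPart c = toPart c') : c = c' := by
  have hlen : c.length = c'.length := by rw [← card_toPart, ← card_toPart, h]
  have hMc : ∀ (d : OrderedFinpartition m),
      StrictMono (fun j => ((part d j).max : WithBot (Fin m))) := by
    intro d
    have e : (fun j => (part d j).max) =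
        fun j => (((part d j).max' (part_nonempty d j) : Fin m) : WithBot (Fin m)) := by
      funext j
      exact ((part d j).coe_max' _).symm
    rw [e]
    exact WithBot.coe_strictMono.comp (max'_part_strictMono d)
  have hr : ∀ (d : OrderedFinpartition m),
      Set.range (fun j => ((part d j).max : WithBot (Fin m)))
        = Finset.max '' (toPart d : Set (Finset (Fin m))) := by
    intro d
    rw [toPart, Finset.coe_image, Finset.coe_univ, Set.image_univ, ← Set.range_comp]
    rfl
  have key : (fun j => ((part c j).max : WithBot (Fin m))) =
      (fun j => ((part c' j).max : WithBot (Fin m))) ∘ Fin.cast hlen := by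
    haveI : WellFoundedLT (Fin c.length) := inferInstance
    have hcomp : StrictMono ((fun j => ((part c' j).max : WithBot (Fin m))) ∘ Fin.cast hlen) :=
      (hMc c').comp (cast_strictMono hlen)
    refine ((hMc c).range_inj hcomp).1 ?_
    rw [hr c, h, ← hr c', Set.range_comp]
    have : Set.range (Fin.cast hlen) = Set.univ :=
      (finCongr hlen).surjective.range_eq
    rw [this, Set.image_univ]
  apply ext' hlen
  intro j
  have hmax := congrFun key j
  have h1 : (part c j).max' (part_nonempty c j) ∈ part c j := Finset.max'_mem _ _
  have h2 : (part c j).max' (part_nonempty c j) ∈ part c' (Fin.cast hlen j) := by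
    apply Finset.mem_of_max
    rw [show ((part c' (Fin.cast hlen j)).max) = (part c j).max from hmax.symm]
    exact ((part c j).coe_max' _).symm
  obtain ⟨B, -, hBu⟩ :=
    (mem_partitionsOf_iff.1 (toPart_mem c)).2 ((part c j).max' (part_nonempty c j))
  have e1 := hBu (part c j) ⟨Finset.mem_image_of_mem _ (mem_univ _), h1⟩
  have e2 := hBu (part c' (Fin.cast hlen j))
    ⟨by rw [h]; exact Finset.mem_image_of_mem _ (mem_univ _), h2⟩
  rw [e1, e2]

lemma iteratedFDeriv_cast {E F : Type*} [NormedAddCommGroup E] [NormedSpace ℝ E]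
    [NormedAddCommGroup F] [NormedSpace ℝ F] {n n' : ℕ} (h : n = n')
    (f : E → F) (x : E) (w : Fin n → E) :
    iteratedFDeriv ℝ n f x w = iteratedFDeriv ℝ n' f x (w ∘ Fin.cast h.symm) := by
  subst h
  rfl

lemma orderEmbOfFin_cast {α : Type*} [LinearOrder α] (s : Finset α) {a b : ℕ}
    (h : s.card = a) (h' : s.card = b) (hc : a = b) (l : Fin b) :
    s.orderEmbOfFin h (Fin.cast hc.symm l) = s.orderEmbOfFin h' l := by
  subst hc
  rfl

end FaaAux

open FaaAux in
theorem stmt13 (p k m : ℕ) (hm : m ≤ k)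
    (g : ℝ → ℝ) (f : EuclideanSpace ℝ (Fin p) → ℝ)
    (hg : ContDiff ℝ (k : ℕ∞) g) (hf : ContDiff ℝ (k : ℕ∞) f)
    (i : Fin m → Fin p) (x : EuclideanSpace ℝ (Fin p)) :
    iteratedFDeriv ℝ m (g ∘ f) x
        (fun l => EuclideanSpace.single (i l) (1 : ℝ)) =
      ∑ π ∈ partitionsOf m,
        iteratedDeriv π.card g (f x) *
          ∏ B ∈ π,
            iteratedFDeriv ℝ B.card f x
              (fun l => EuclideanSpace.single (i ((B.orderIsoOfFin rfl) l : Fin m)) (1 : ℝ)) := by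
  classical
  have hgs : HasFTaylorSeriesUpToOn ((k : ℕ∞) : WithTop ℕ∞) g (ftaylorSeries ℝ g) Set.univ := by
    rw [← ftaylorSeriesWithin_univ]
    exact (hg.contDiffOn).ftaylorSeriesWithin uniqueDiffOn_univ
  have hfs : HasFTaylorSeriesUpToOn ((k : ℕ∞) : WithTop ℕ∞) f (ftaylorSeries ℝ f) Set.univ := by
    rw [← ftaylorSeriesWithin_univ]
    exact (hf.contDiffOn).ftaylorSeriesWithin uniqueDiffOn_univ
  have hcomp := hgs.comp hfs (Set.mapsTo_univ f Set.univ)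
  have hEq := (hasFTaylorSeriesUpToOn_univ_iff.1 hcomp).eq_iteratedFDeriv
      (m := m) (by exact_mod_cast hm) x
  rw [← hEq]
  set v : Fin m → EuclideanSpace ℝ (Fin p) :=
    fun l => EuclideanSpace.single (i l) (1 : ℝ) with hv
  show (∑ c : OrderedFinpartition m,
      (ftaylorSeries ℝ g (f x)).compAlongOrderedFinpartition (ftaylorSeries ℝ f x) c) v = _
  rw [ContinuousMultilinearMap.sum_apply]
  apply Finset.sum_bij (fun (c : OrderedFinpartition m) _ => toPart c)
  · intro c _
    exact toPart_mem c
  · intro c _ c' _ h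
    exact toPart_injective h
  · intro π hπ
    obtain ⟨h0, hun⟩ := mem_partitionsOf_iff.1 hπ
    exact ⟨ofPart hun h0, Finset.mem_univ _, toPart_ofPart hun h0⟩
  · intro c _
    rw [FormalMultilinearSeries.compAlongOrderedFinpartition_apply]
    have hq : (ftaylorSeries ℝ g (f x)) c.length = iteratedFDeriv ℝ c.length g (f x) := rfl
    rw [hq, iteratedFDeriv_apply_eq_iteratedDeriv_mul_prod, card_toPart, smul_eq_mul, mul_comm]
    congr 1
    rw [toPart, Finset.prod_image (fun a _ b _ h => part_injective c h)]
    apply Finset.prod_congr rfl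
    intro j _
    have hcard : (part c j).card = c.partSize j := card_part c j
    rw [iteratedFDeriv_cast hcard f x]
    show iteratedFDeriv ℝ (c.partSize j) f x (v ∘ c.emb j) = _
    congr 1
    funext l
    simp only [Function.comp_apply]
    have hl : ((((part c j).orderIsoOfFin rfl) (Fin.cast hcard.symm l)) : Fin m) = c.emb j l := by
      rw [Finset.coe_orderIsoOfFin_apply, orderEmbOfFin_cast _ rfl (card_part c j) hcard l,
        emb_eq_orderEmbOfFin c j]
    rw [hl]
end
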